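/- Let A ⊆ ℝ, x ∈ ℝ, and let A' be a measurable cover of A with lower I-density I-d₋(x, A') > 0. Then x is a limit point of A in the I-sparse set topology: every U ∈ 𝒰 with x ∈ U satisfies U ∩ (A \ {x}) ≠ ∅. -/

import Mathlib

open MeasureTheory Filter Set
open scoped ENNReal

noncomputable section

/-- A nontrivial admissible ideal of subsets of ℕ: closed under subsets and
finite unions, contains every finite set, and does not contain ℕ itself. -/
structure AdmissibleIdeal : Type where
  carrier : Set (Set ℕ)
  subset_mem : ∀ ⦃A B : Set ℕ⦄, A ∈ carrier → B ⊆ A → B ∈ carrier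
  union_mem : ∀ ⦃A B : Set ℕ⦄, A ∈ carrier → B ∈ carrier → A ∪ B ∈ carrier
  finite_mem : ∀ A : Set ℕ, A.Finite → A ∈ carrier
  univ_not_mem : (Set.univ : Set ℕ) ∉ carrier

/-- The filter F(I) = {M ⊆ ℕ : ℕ \ M ∈ I} associated with the ideal I. -/
def AdmissibleIdeal.filter (I : AdmissibleIdeal) : Filter ℕ :=
  Filter.comk (· ∈ I.carrier) (I.finite_mem ∅ Set.finite_empty)
    (fun _t ht _s hs => I.subset_mem ht hs)
    (fun _s hs _t ht => I.union_mem hs ht)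

/-- A sequence of closed intervals admissible about the point `p`:
each `J n` is a closed interval containing `p`, and
`{n : 0 < λ(J n) < 1/n} ∈ F(I)`. -/
def AdmissibleSeq (I : AdmissibleIdeal) (p : ℝ) (J : ℕ → Set ℝ) : Prop :=
  (∀ n, ∃ a b : ℝ, a ≤ b ∧ J n = Set.Icc a b) ∧ (∀ n, p ∈ J n) ∧
    {n : ℕ | 0 < volume (J n) ∧ volume (J n) < (n : ℝ≥0∞)⁻¹} ∈ I.filter

/-- The sequence n ↦ λ(E ∩ J n)/λ(J n) (interpreted as 0 when λ(J n) = 0). -/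
def ratioSeq (E : Set ℝ) (J : ℕ → Set ℝ) : ℕ → ℝ :=
  fun n => (volume (E ∩ J n) / volume (J n)).toReal

/-- Upper I-density of `E` at `p`: sup over admissible sequences of the
limsup along `F(I)` of the measure ratios. -/
def upperIDensity (I : AdmissibleIdeal) (p : ℝ) (E : Set ℝ) : ℝ :=
  sSup {l : ℝ | ∃ J : ℕ → Set ℝ, AdmissibleSeq I p J ∧
    l = Filter.limsup (ratioSeq E J) I.filter}

/-- Lower I-density of `E` at `p`: inf over admissible sequences of the
liminf along `F(I)` of the measure ratios. -/
def lowerIDensity (I : AdmissibleIdeal) (p : ℝ) (E : Set ℝ) : ℝ :=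
  sInf {l : ℝ | ∃ J : ℕ → Set ℝ, AdmissibleSeq I p J ∧
    l = Filter.liminf (ratioSeq E J) I.filter}

/-- `C` is a measurable cover of `A`. -/
def IsMeasurableCover (C A : Set ℝ) : Prop :=
  MeasurableSet C ∧ A ⊆ C ∧
    ∀ F : Set ℝ, MeasurableSet F → F ⊆ C \ A → volume F = 0

/-- `A` is I-sparse at `x`, i.e. `A ∈ S_I(x)`. -/
def ISparseAt (I : AdmissibleIdeal) (A : Set ℝ) (x : ℝ) : Prop :=
  ∀ B : Set ℝ, MeasurableSet B → upperIDensity I x B < 1 →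
    ∀ C : Set ℝ, IsMeasurableCover C A → upperIDensity I x (C ∪ B) < 1

/-- The I-density topology T_I. -/
def IDensityTopology (I : AdmissibleIdeal) : Set (Set ℝ) :=
  {E | MeasurableSet E ∧ ∀ x ∈ E, lowerIDensity I x E = 1}

/-- The I-sparse set topology 𝒰. -/
def sparseTop (I : AdmissibleIdeal) : Set (Set ℝ) :=
  {E | ∀ x ∈ E, ISparseAt I Eᶜ x}

/-! ### Auxiliary lemmas -/

section Aux

variable (I : AdmissibleIdeal)

lemma AdmissibleIdeal.mem_filter_iff {S : Set ℕ} : S ∈ I.filter ↔ Sᶜ ∈ I.carrier :=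
  Filter.mem_comk

lemma AdmissibleIdeal.filter_neBot : I.filter.NeBot := by
  refine Filter.neBot_iff.mpr fun h => I.univ_not_mem ?_
  have : (∅ : Set ℕ) ∈ I.filter := by rw [h]; exact Filter.mem_bot
  simpa [Set.compl_empty] using I.mem_filter_iff.mp this

/-- The standard admissible sequence about `p`. -/
def stdSeq (p : ℝ) : ℕ → Set ℝ := fun n => Set.Icc p (p + ((n : ℝ) + 2)⁻¹)

lemma stdSeq_admissible (p : ℝ) : AdmissibleSeq I p (stdSeq p) := by
  have hpos : ∀ n : ℕ, (0 : ℝ) < ((n : ℝ) + 2)⁻¹ := fun n => by positivity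
  refine ⟨fun n => ⟨p, p + ((n : ℝ) + 2)⁻¹,
      le_add_of_nonneg_right (hpos n).le, rfl⟩,
    fun n => ⟨le_refl p, le_add_of_nonneg_right (hpos n).le⟩, ?_⟩
  have hall : ∀ n : ℕ, 0 < volume (stdSeq p n) ∧ volume (stdSeq p n) < (n : ℝ≥0∞)⁻¹ := by
    intro n
    have hv : volume (stdSeq p n) = ENNReal.ofReal (((n : ℝ) + 2)⁻¹) := by
      simp [stdSeq, Real.volume_Icc]
    constructor
    · rw [hv]; exact ENNReal.ofReal_pos.mpr (hpos n)
    · rw [hv, ENNReal.ofReal_inv_of_pos (by positivity)]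
      have hcast : ENNReal.ofReal ((n : ℝ) + 2) = (n : ℝ≥0∞) + 2 := by
        rw [ENNReal.ofReal_add (by positivity) (by norm_num)]
        simp
      rw [hcast]
      exact ENNReal.inv_lt_inv.mpr
        (ENNReal.lt_add_right (ENNReal.natCast_ne_top n) (by norm_num))
  have : {n : ℕ | 0 < volume (stdSeq p n) ∧ volume (stdSeq p n) < (n : ℝ≥0∞)⁻¹} = Set.univ :=
    Set.eq_univ_of_forall hall
  rw [this, I.mem_filter_iff]
  simpa [Set.compl_univ] using I.finite_mem ∅ Set.finite_empty

lemma ratio_nonneg (E : Set ℝ) (J : ℕ → Set ℝ) (n : ℕ) : 0 ≤ ratioSeq E J n :=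
  ENNReal.toReal_nonneg

lemma ratio_le_one (E : Set ℝ) (J : ℕ → Set ℝ) (n : ℕ) : ratioSeq E J n ≤ 1 := by
  have h : volume (E ∩ J n) / volume (J n) ≤ 1 :=
    ENNReal.div_le_of_le_mul (by rw [one_mul]; exact measure_mono Set.inter_subset_right)
  calc ratioSeq E J n ≤ (1 : ℝ≥0∞).toReal := ENNReal.toReal_mono ENNReal.one_ne_top h
    _ = 1 := ENNReal.toReal_one

lemma ratio_cobdd_le (E : Set ℝ) (J : ℕ → Set ℝ) :
    I.filter.IsCoboundedUnder (· ≤ ·) (ratioSeq E J) :=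
  have := I.filter_neBot
  Filter.isCoboundedUnder_le_of_le I.filter (ratio_nonneg E J)

lemma ratio_cobdd_ge (E : Set ℝ) (J : ℕ → Set ℝ) :
    I.filter.IsCoboundedUnder (· ≥ ·) (ratioSeq E J) :=
  have := I.filter_neBot
  Filter.isCoboundedUnder_ge_of_le I.filter (ratio_le_one E J)

lemma ratio_bdd_ge (E : Set ℝ) (J : ℕ → Set ℝ) :
    I.filter.IsBoundedUnder (· ≥ ·) (ratioSeq E J) :=
  ⟨0, Filter.eventually_map.mpr (Filter.Eventually.of_forall (ratio_nonneg E J))⟩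

lemma ratio_bdd_le (E : Set ℝ) (J : ℕ → Set ℝ) :
    I.filter.IsBoundedUnder (· ≤ ·) (ratioSeq E J) :=
  ⟨1, Filter.eventually_map.mpr (Filter.Eventually.of_forall (ratio_le_one E J))⟩

lemma limsup_ratio_le_one (E : Set ℝ) (J : ℕ → Set ℝ) :
    Filter.limsup (ratioSeq E J) I.filter ≤ 1 :=
  Filter.limsup_le_of_le (ratio_cobdd_le I E J)
    (Filter.Eventually.of_forall (ratio_le_one E J))

lemma liminf_ratio_nonneg (E : Set ℝ) (J : ℕ → Set ℝ) :
    0 ≤ Filter.liminf (ratioSeq E J) I.filter :=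
  Filter.le_liminf_of_le (ratio_cobdd_ge I E J)
    (Filter.Eventually.of_forall (ratio_nonneg E J))

lemma liminf_ratio_le_one (E : Set ℝ) (J : ℕ → Set ℝ) :
    Filter.liminf (ratioSeq E J) I.filter ≤ 1 :=
  Filter.liminf_le_of_le (ratio_bdd_ge I E J)
    (fun b hb => by
      have := I.filter_neBot
      obtain ⟨n, hn⟩ := (hb.and (Filter.Eventually.of_forall (ratio_le_one E J))).exists
      exact hn.1.trans hn.2)

/-- If `E` has null complement, the ratio sequence tends to 1 along the filter. -/
lemma limsup_ratio_eq_one_of_null_compl (E : Set ℝ) (J : ℕ → Set ℝ) (p : ℝ)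
    (hJ : AdmissibleSeq I p J) (hE : volume Eᶜ = 0) :
    Filter.limsup (ratioSeq E J) I.filter = 1 := by
  have := I.filter_neBot
  have hev : ∀ᶠ n in I.filter, ratioSeq E J n = 1 := by
    filter_upwards [hJ.2.2] with n hn
    have hne0 : volume (J n) ≠ 0 := hn.1.ne'
    have hnetop : volume (J n) ≠ ⊤ := (lt_of_lt_of_le hn.2 le_top).ne
    have hdiff : volume (J n \ E) = 0 :=
      measure_mono_null (fun y hy => hy.2) hE
    have hinter : volume (E ∩ J n) = volume (J n) := by
      refine le_antisymm (measure_mono Set.inter_subset_right) ?_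
      calc volume (J n) = volume ((J n ∩ E) ∪ (J n \ E)) := by
            rw [Set.inter_union_diff]
        _ ≤ volume (J n ∩ E) + volume (J n \ E) := measure_union_le _ _
        _ = volume (E ∩ J n) := by rw [hdiff, add_zero, Set.inter_comm]
    unfold ratioSeq
    rw [hinter, ENNReal.div_self hne0 hnetop, ENNReal.toReal_one]
  calc Filter.limsup (ratioSeq E J) I.filter
      = Filter.limsup (fun _ => (1 : ℝ)) I.filter := Filter.limsup_congr hev
    _ = 1 := Filter.limsup_const 1

/-- Key inequality: the limsup of the ratios of the complement of a measurable set is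
`1 -` the liminf of the ratios of the set. -/
lemma limsup_ratio_compl (E : Set ℝ) (hE : MeasurableSet E) (J : ℕ → Set ℝ) (p : ℝ)
    (hJ : AdmissibleSeq I p J) :
    Filter.limsup (ratioSeq Eᶜ J) I.filter
      = 1 - Filter.liminf (ratioSeq E J) I.filter := by
  have := I.filter_neBot
  have hev : ∀ᶠ n in I.filter, ratioSeq Eᶜ J n = 1 - ratioSeq E J n := by
    filter_upwards [hJ.2.2] with n hn
    have hne0 : volume (J n) ≠ 0 := hn.1.ne'
    have hnetop : volume (J n) ≠ ⊤ := (lt_of_lt_of_le hn.2 le_top).ne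
    have hsum : volume (J n ∩ E) + volume (J n \ E) = volume (J n) :=
      measure_inter_add_diff (J n) hE
    have h1 : volume (E ∩ J n) / volume (J n) ≠ ⊤ := by
      refine ne_top_of_le_ne_top ENNReal.one_ne_top ?_
      exact ENNReal.div_le_of_le_mul (by rw [one_mul]; exact measure_mono Set.inter_subset_right)
    have h2 : volume (Eᶜ ∩ J n) / volume (J n) ≠ ⊤ := by
      refine ne_top_of_le_ne_top ENNReal.one_ne_top ?_
      exact ENNReal.div_le_of_le_mul (by rw [one_mul]; exact measure_mono Set.inter_subset_right)
    have hadd : ratioSeq E J n + ratioSeq Eᶜ J n = 1 := by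
      unfold ratioSeq
      rw [← ENNReal.toReal_add h1 h2, ENNReal.div_add_div_same]
      have : volume (E ∩ J n) + volume (Eᶜ ∩ J n) = volume (J n) := by
        rw [Set.inter_comm E, Set.inter_comm Eᶜ, ← Set.diff_eq]
        exact hsum
      rw [this, ENNReal.div_self hne0 hnetop, ENNReal.toReal_one]
    linarith
  calc Filter.limsup (ratioSeq Eᶜ J) I.filter
      = Filter.limsup (fun n => 1 - ratioSeq E J n) I.filter := Filter.limsup_congr hev
    _ = 1 - Filter.liminf (ratioSeq E J) I.filter :=
        limsup_const_sub I.filter (ratioSeq E J) 1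
          (ratio_cobdd_ge I E J) (ratio_bdd_ge I E J)

lemma lowerIDensity_le_one (p : ℝ) (E : Set ℝ) : lowerIDensity I p E ≤ 1 := by
  have hmem : Filter.liminf (ratioSeq E (stdSeq p)) I.filter ∈
      {l : ℝ | ∃ J : ℕ → Set ℝ, AdmissibleSeq I p J ∧
        l = Filter.liminf (ratioSeq E J) I.filter} :=
    ⟨stdSeq p, stdSeq_admissible I p, rfl⟩
  have hbdd : BddBelow {l : ℝ | ∃ J : ℕ → Set ℝ, AdmissibleSeq I p J ∧
      l = Filter.liminf (ratioSeq E J) I.filter} :=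
    ⟨0, fun l ⟨J, _, hl⟩ => hl ▸ liminf_ratio_nonneg I E J⟩
  exact (csInf_le hbdd hmem).trans (liminf_ratio_le_one I E (stdSeq p))

lemma upperIDensity_compl_lt_one (p : ℝ) (E : Set ℝ) (hE : MeasurableSet E)
    (hpos : 0 < lowerIDensity I p E) : upperIDensity I p Eᶜ < 1 := by
  have hbddE : BddBelow {l : ℝ | ∃ J : ℕ → Set ℝ, AdmissibleSeq I p J ∧
      l = Filter.liminf (ratioSeq E J) I.filter} :=
    ⟨0, fun l ⟨J, _, hl⟩ => hl ▸ liminf_ratio_nonneg I E J⟩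
  have hle : upperIDensity I p Eᶜ ≤ 1 - lowerIDensity I p E := by
    refine Real.sSup_le ?_ (by linarith [lowerIDensity_le_one I p E])
    rintro l ⟨J, hJ, rfl⟩
    rw [limsup_ratio_compl I E hE J p hJ]
    have : lowerIDensity I p E ≤ Filter.liminf (ratioSeq E J) I.filter :=
      csInf_le hbddE ⟨J, hJ, rfl⟩
    linarith
  linarith

lemma upperIDensity_of_null_compl (p : ℝ) (E : Set ℝ) (hE : volume Eᶜ = 0) :
    (1 : ℝ) ≤ upperIDensity I p E := by
  have hmem : (1 : ℝ) ∈ {l : ℝ | ∃ J : ℕ → Set ℝ, AdmissibleSeq I p J ∧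
      l = Filter.limsup (ratioSeq E J) I.filter} :=
    ⟨stdSeq p, stdSeq_admissible I p,
      (limsup_ratio_eq_one_of_null_compl I E (stdSeq p) p (stdSeq_admissible I p) hE).symm⟩
  have hbdd : BddAbove {l : ℝ | ∃ J : ℕ → Set ℝ, AdmissibleSeq I p J ∧
      l = Filter.limsup (ratioSeq E J) I.filter} :=
    ⟨1, fun l ⟨J, _, hl⟩ => hl ▸ limsup_ratio_le_one I E J⟩
  exact le_csSup hbdd hmem

end Aux

/-- If some measurable cover of `A` has positive lower I-density at `x`, then `x` is
a limit point of `A` in the I-sparse set topology. -/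
theorem sparseTop_limit_point (I : AdmissibleIdeal) (A : Set ℝ) (x : ℝ) (A' : Set ℝ)
    (hA' : IsMeasurableCover A' A) (hpos : 0 < lowerIDensity I x A') :
    ∀ U ∈ sparseTop I, x ∈ U → (U ∩ (A \ {x})).Nonempty := by
  intro U hU hxU
  by_contra hcon
  rw [Set.not_nonempty_iff_eq_empty] at hcon
  obtain ⟨hA'meas, hAA', hA'null⟩ := hA'
  -- A \ {x} ⊆ Uᶜ
  have hsub : A \ {x} ⊆ Uᶜ := by
    intro y hy hyU
    have : y ∈ U ∩ (A \ {x}) := ⟨hyU, hy⟩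
    rw [hcon] at this
    exact this
  -- the measurable hull of Uᶜ
  set C := toMeasurable volume Uᶜ with hC
  have hCmeas : MeasurableSet C := measurableSet_toMeasurable _ _
  have hCcover : IsMeasurableCover C Uᶜ := by
    refine ⟨hCmeas, subset_toMeasurable _ _, fun F hF hFsub => ?_⟩
    have h1 : volume (C ∩ F) = volume (Uᶜ ∩ F) :=
      Measure.measure_toMeasurable_inter_of_sFinite hF Uᶜ
    have h2 : C ∩ F = F := Set.inter_eq_right.mpr (hFsub.trans Set.diff_subset)
    have h3 : Uᶜ ∩ F = ∅ := by
      apply Set.eq_empty_of_forall_notMem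
      rintro y ⟨hyU, hyF⟩
      exact (hFsub hyF).2 hyU
    rw [h2] at h1
    rw [h1, h3, measure_empty]
  -- the union C ∪ A'ᶜ has null complement
  have hnull : volume (C ∪ A'ᶜ)ᶜ = 0 := by
    have hcompl : (C ∪ A'ᶜ)ᶜ = A' \ C := by
      rw [Set.compl_union, compl_compl, Set.inter_comm, Set.diff_eq]
    have hFsub : (A' \ C) \ {x} ⊆ A' \ A := by
      rintro y ⟨⟨hyA', hyC⟩, hyx⟩
      refine ⟨hyA', fun hyA => hyC ?_⟩
      exact (subset_toMeasurable _ _) (hsub ⟨hyA, hyx⟩)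
    have hFmeas : MeasurableSet ((A' \ C) \ {x}) :=
      (hA'meas.diff hCmeas).diff (measurableSet_singleton x)
    have hF0 : volume ((A' \ C) \ {x}) = 0 := hA'null _ hFmeas hFsub
    have : volume (A' \ C) ≤ volume (((A' \ C) \ {x}) ∪ {x}) := by
      apply measure_mono
      intro y hy
      by_cases hyx : y ∈ ({x} : Set ℝ)
      · exact Or.inr hyx
      · exact Or.inl ⟨hy, hyx⟩
    rw [hcompl]
    refine le_antisymm (this.trans ?_) zero_le
    calc volume (((A' \ C) \ {x}) ∪ {x}) ≤ volume ((A' \ C) \ {x}) + volume ({x} : Set ℝ) :=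
          measure_union_le _ _
      _ = 0 := by rw [hF0, measure_singleton, add_zero]
  -- apply sparseness of Uᶜ at x
  have hsparse : ISparseAt I Uᶜ x := hU x hxU
  have hlt : upperIDensity I x (C ∪ A'ᶜ) < 1 :=
    hsparse A'ᶜ hA'meas.compl
      (upperIDensity_compl_lt_one I x A' hA'meas hpos) C hCcover
  have hge : (1 : ℝ) ≤ upperIDensity I x (C ∪ A'ᶜ) :=
    upperIDensity_of_null_compl I x (C ∪ A'ᶜ) hnull
  linarith
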